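/- Let M be an n×n matrix over ℝ_max = ℝ ∪ {−∞} and let λ ∈ ℝ. If there exists u ∈ ℝⁿ (all entries finite) such that max_{1≤j≤n} (M_{ij} + u_j) = λ + u_i for every i = 1,…,n, then no row of M is identically −∞ and λ equals the maximal circuit mean ρ(M). -/

import Mathlib

/-- The set of average weights of elementary circuits of the precedence graph of a
max-plus matrix `M` (entries in `ℝ ∪ {-∞} = WithBot ℝ`).  An elementary circuit is
given by an injective map `c : Fin (k+1) → Fin n` all of whose cyclically consecutive
arcs are present in `M`. -/
def circuitMeans {n : ℕ} (M : Fin n → Fin n → WithBot ℝ) : Set ℝ :=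
  {m | ∃ (k : ℕ) (c : Fin (k + 1) → Fin n), Function.Injective c ∧
    (∀ l, M (c l) (c (l + 1)) ≠ ⊥) ∧
    m = (∑ l, (M (c l) (c (l + 1))).unbotD 0) / (k + 1)}

/-- The maximal circuit mean `ρ(M)` of a max-plus matrix. -/
noncomputable def maxCircuitMean {n : ℕ} (M : Fin n → Fin n → WithBot ℝ) : ℝ :=
  sSup (circuitMeans M)

/-- if a max-plus matrix `M` has a finite tropical eigenvector `u ∈ ℝⁿ`
associated with an eigenvalue `λ ∈ ℝ`, i.e. `max_j (M_{ij} + u_j) = λ + u_i` for all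
`i`, then no row of `M` is identically `-∞` and `λ` is the maximal circuit mean of
`M`. -/
theorem tropical_eigenvalue_eq_maxCircuitMean
    {n : ℕ} (hn : 0 < n) (M : Fin n → Fin n → WithBot ℝ) (lam : ℝ)
    (u : Fin n → ℝ)
    (hu : ∀ i, (Finset.univ.sup'
          (Finset.univ_nonempty_iff.mpr (Fin.pos_iff_nonempty.mp hn))
          fun j => M i j + (u j : WithBot ℝ))
        = ((lam + u i : ℝ) : WithBot ℝ)) :
    (∀ i, ∃ j, M i j ≠ ⊥) ∧ lam = maxCircuitMean M := by
  classical
  set hne : (Finset.univ : Finset (Fin n)).Nonempty :=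
    Finset.univ_nonempty_iff.mpr (Fin.pos_iff_nonempty.mp hn) with hne_def
  -- choose an argmax map f
  have hex : ∀ i, ∃ j, M i j + (u j : WithBot ℝ) = ((lam + u i : ℝ) : WithBot ℝ) := by
    intro i
    obtain ⟨j, -, hj⟩ := Finset.exists_mem_eq_sup' hne (fun j => M i j + (u j : WithBot ℝ))
    exact ⟨j, by rw [← hj, hu i]⟩
  choose f hf using hex
  have hfval : ∀ i, M i (f i) = ((lam + u i - u (f i) : ℝ) : WithBot ℝ) := by
    intro i
    have h := hf i
    have hb : M i (f i) ≠ ⊥ := by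
      intro hbot
      rw [hbot, WithBot.bot_add] at h
      exact WithBot.bot_ne_coe h
    obtain ⟨r, hr⟩ := WithBot.ne_bot_iff_exists.mp hb
    rw [← hr] at h ⊢
    rw [← WithBot.coe_add, WithBot.coe_inj] at h
    rw [WithBot.coe_inj]
    linarith
  -- upper bound: every circuit mean is ≤ lam
  have hbound : ∀ m ∈ circuitMeans M, m ≤ lam := by
    rintro m ⟨k, c, hcinj, hcarc, rfl⟩
    have hle : ∀ l : Fin (k + 1),
        (M (c l) (c (l + 1))).unbotD 0 ≤ lam + u (c l) - u (c (l + 1)) := by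
      intro l
      obtain ⟨r, hr⟩ := WithBot.ne_bot_iff_exists.mp (hcarc l)
      have h1 : M (c l) (c (l + 1)) + (u (c (l + 1)) : WithBot ℝ)
          ≤ ((lam + u (c l) : ℝ) : WithBot ℝ) := by
        rw [← hu (c l)]
        exact Finset.le_sup' (fun j => M (c l) j + (u j : WithBot ℝ)) (Finset.mem_univ _)
      rw [← hr, ← WithBot.coe_add, WithBot.coe_le_coe] at h1
      rw [← hr, WithBot.unbotD_coe]
      linarith
    have hsum : ∑ l, (M (c l) (c (l + 1))).unbotD 0 ≤ (k + 1) * lam := by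
      calc ∑ l, (M (c l) (c (l + 1))).unbotD 0
          ≤ ∑ l, (lam + u (c l) - u (c (l + 1))) := Finset.sum_le_sum fun l _ => hle l
        _ = (k + 1) * lam + (∑ l, u (c l)) - (∑ l, u (c (l + 1))) := by
            rw [Finset.sum_sub_distrib, Finset.sum_add_distrib]
            simp [Finset.card_univ, mul_comm]
        _ = (k + 1) * lam := by
            have : ∑ l : Fin (k + 1), u (c (l + 1)) = ∑ l : Fin (k + 1), u (c l) :=
              Fintype.sum_equiv (Equiv.addRight (1 : Fin (k + 1))) _ _ (fun l => rfl)
            rw [this]; ring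
    have hk : (0 : ℝ) < (k : ℝ) + 1 := by positivity
    rw [div_le_iff₀ hk]
    calc ∑ l, (M (c l) (c (l + 1))).unbotD 0 ≤ (k + 1) * lam := hsum
      _ = lam * ((k : ℝ) + 1) := by ring
  -- exhibit a circuit with mean exactly lam
  have hmem : lam ∈ circuitMeans M := by
    have i0 : Fin n := ⟨0, hn⟩
    obtain ⟨a0, b0, hab, heq⟩ :=
      Finite.exists_ne_map_eq_of_infinite (fun m : ℕ => f^[m] i0)
    have hP : ∃ b, ∃ a, a < b ∧ f^[a] i0 = f^[b] i0 := by
      rcases lt_or_gt_of_ne hab with h | h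
      · exact ⟨b0, a0, h, heq⟩
      · exact ⟨a0, b0, h, heq.symm⟩
    set b := Nat.find hP with hb_def
    obtain ⟨a, hab', haeq⟩ := Nat.find_spec hP
    set k := b - a - 1 with hk_def
    have hba : b = a + k + 1 := by omega
    set c : Fin (k + 1) → Fin n := fun l => f^[a + l.val] i0 with hc_def
    have hcinj : Function.Injective c := by
      have key : ∀ s t : Fin (k + 1), s.val < t.val → c s ≠ c t := by
        intro s t hst hcst
        have htb : a + t.val < b := by omega
        exact Nat.find_min hP htb ⟨a + s.val, by omega, hcst⟩
      intro s t hst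
      rcases lt_trichotomy s.val t.val with h | h | h
      · exact absurd hst (key s t h)
      · exact Fin.ext h
      · exact absurd hst.symm (key t s h)
    have hstep : ∀ l : Fin (k + 1), c (l + 1) = f (c l) := by
      intro l
      rcases Nat.lt_or_ge l.val k with h | h
      · have hv : ((l + 1 : Fin (k + 1))).val = l.val + 1 := by
          rw [Fin.val_add_one]
          have : l ≠ Fin.last k := by
            intro hl; rw [hl] at h; simp at h
          simp [this]
        simp only [hc_def, hv, ← Nat.add_assoc, Function.iterate_succ_apply']
      · have hlk : l.val = k := by omega
        have hl : l = Fin.last k := Fin.ext (by simpa using hlk)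
        have hv : ((l + 1 : Fin (k + 1))).val = 0 := by
          rw [hl]; simp
        simp only [hc_def, hv, Nat.add_zero]
        rw [haeq, ← hb_def, hba]
        rw [show a + k + 1 = (a + k) + 1 from rfl, Function.iterate_succ_apply', hlk]
    have harcval : ∀ l : Fin (k + 1),
        M (c l) (c (l + 1)) = ((lam + u (c l) - u (c (l + 1)) : ℝ) : WithBot ℝ) := by
      intro l
      rw [hstep l]
      exact hfval (c l)
    refine ⟨k, c, hcinj, fun l => by rw [harcval l]; exact WithBot.coe_ne_bot, ?_⟩
    have hsum : ∑ l, (M (c l) (c (l + 1))).unbotD 0 = (k + 1) * lam := by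
      calc ∑ l, (M (c l) (c (l + 1))).unbotD 0
          = ∑ l, (lam + u (c l) - u (c (l + 1))) := by
            refine Finset.sum_congr rfl fun l _ => ?_
            rw [harcval l, WithBot.unbotD_coe]
        _ = (k + 1) * lam + (∑ l, u (c l)) - (∑ l, u (c (l + 1))) := by
            rw [Finset.sum_sub_distrib, Finset.sum_add_distrib]
            simp [Finset.card_univ, mul_comm]
        _ = (k + 1) * lam := by
            have : ∑ l : Fin (k + 1), u (c (l + 1)) = ∑ l : Fin (k + 1), u (c l) :=
              Fintype.sum_equiv (Equiv.addRight (1 : Fin (k + 1))) _ _ (fun l => rfl)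
            rw [this]; ring
    rw [hsum]
    field_simp
  constructor
  · intro i
    refine ⟨f i, ?_⟩
    rw [hfval i]
    exact WithBot.coe_ne_bot
  · refine le_antisymm ?_ ?_
    · exact le_csSup ⟨lam, hbound⟩ hmem
    · exact csSup_le ⟨lam, hmem⟩ hbound
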